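/- Let H be a complex Hilbert space and c : H → H a bounded operator with adjoint c* = -c. Let l ∈ ℝ, ε > 0, and f : (0,ε) → (0,∞) a continuous function with ∫₀^ε f(x) dx = +∞. If φ : (0,ε) → H is differentiable, satisfies φ'(x) = -l·f(x)·c(φ(x)) for all x ∈ (0,ε), and ∫₀^ε ‖φ(x)‖² f(x) dx < ∞, then φ(x) = 0 for all x ∈ (0,ε). -/

import Mathlib

open MeasureTheory Set Filter
set_option synthInstance.maxHeartbeats 1000000
set_option maxHeartbeats 1000000

/-- If `c` is a bounded skew-adjoint operator on a complex Hilbert space, `l` is real,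
`f : (0,ε) → (0,∞)` is continuous with `∫₀^ε f = ∞`, and `φ` solves `φ' = -l f c φ`
on `(0,ε)` and is square-integrable w.r.t. `f dx`, then `φ ≡ 0` on `(0,ε)`. -/
theorem kernel_part_vanishes
    {H : Type*} [NormedAddCommGroup H] [InnerProductSpace ℂ H] [CompleteSpace H]
    (c : H →L[ℂ] H) (hc_skew : ContinuousLinearMap.adjoint c = -c)
    (l : ℝ) (ε : ℝ) (hε : 0 < ε)
    (f : ℝ → ℝ) (hf_cont : ContinuousOn f (Set.Ioo 0 ε))
    (hf_pos : ∀ x ∈ Set.Ioo 0 ε, 0 < f x)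
    (hf_div : ∫⁻ x in Set.Ioo 0 ε, ENNReal.ofReal (f x) = ⊤)
    (φ : ℝ → H)
    (hφ_ode : ∀ x ∈ Set.Ioo 0 ε,
      HasDerivAt φ (-(((l * f x : ℝ) : ℂ) • c (φ x))) x)
    (hφ_L2 : ∫⁻ x in Set.Ioo 0 ε, ENNReal.ofReal (‖φ x‖ ^ 2 * f x) < ⊤) :
    ∀ x ∈ Set.Ioo 0 ε, φ x = 0 := by
  -- The inner product ⟪φ x, φ x⟫ has zero derivative on (0, ε)
  set g : ℝ → ℂ := fun x => inner ℂ (φ x) (φ x) with hg_def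
  have hg : ∀ x ∈ Set.Ioo 0 ε, HasDerivAt g 0 x := by
    intro x hx
    have h := (hφ_ode x hx).inner ℂ (hφ_ode x hx)
    have hskew : (inner ℂ (c (φ x)) (φ x) : ℂ) = - inner ℂ (φ x) (c (φ x)) := by
      have := ContinuousLinearMap.adjoint_inner_right c (φ x) (φ x)
      rw [hc_skew] at this
      simpa using this.symm
    have : (inner ℂ (φ x) (-(((l * f x : ℝ) : ℂ) • c (φ x))) : ℂ)
        + inner ℂ (-(((l * f x : ℝ) : ℂ) • c (φ x))) (φ x) = 0 := by
      rw [inner_neg_right, inner_neg_left, inner_smul_right, inner_smul_left, hskew]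
      simp [Complex.conj_ofReal]
    rwa [this] at h
  -- hence it is constant on (0, ε)
  have hconst : ∀ x ∈ Set.Ioo 0 ε, ∀ y ∈ Set.Ioo 0 ε, g x = g y := by
    intro x hx y hy
    refine (convex_Ioo 0 ε).is_const_of_fderivWithin_eq_zero
      (fun z hz => ((hg z hz).differentiableAt).differentiableWithinAt) ?_ hx hy
    intro z hz
    rw [fderivWithin_eq_fderiv ((isOpen_Ioo).uniqueDiffOn z hz)
      ((hg z hz).differentiableAt)]
    have := (hg z hz).deriv
    ext
    simp [← toSpanSingleton_deriv, this]
  -- so ‖φ x‖² is constant on (0, ε)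
  intro x hx
  by_contra hne
  have hK : 0 < ‖φ x‖ ^ 2 := by
    have := norm_pos_iff.mpr hne
    positivity
  have hnorm : ∀ y ∈ Set.Ioo 0 ε, ‖φ y‖ ^ 2 = ‖φ x‖ ^ 2 := by
    intro y hy
    have h1 := congrArg (fun z : ℂ => RCLike.re z) (hconst y hy x hx)
    simpa only [hg_def, inner_self_eq_norm_sq] using h1
  -- contradiction with finiteness of the L² integral
  have hbig : (∫⁻ y in Set.Ioo 0 ε, ENNReal.ofReal (‖φ y‖ ^ 2 * f y)) = ⊤ := by
    have heq : (∫⁻ y in Set.Ioo 0 ε, ENNReal.ofReal (‖φ y‖ ^ 2 * f y))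
        = ∫⁻ y in Set.Ioo 0 ε, ENNReal.ofReal (‖φ x‖ ^ 2) * ENNReal.ofReal (f y) := by
      refine setLIntegral_congr_fun measurableSet_Ioo ?_
      intro y hy
      beta_reduce
      rw [hnorm y hy, ENNReal.ofReal_mul (by positivity)]
    rw [heq, lintegral_const_mul' _ _ ENNReal.ofReal_ne_top, hf_div,
      ENNReal.mul_top (by simp [ENNReal.ofReal_eq_zero, not_le, hK, hne])]
  rw [hbig] at hφ_L2
  exact absurd hφ_L2 (by simp)
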